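/- arXiv:1812.11297 — 2 statements merged into one kernel-verified Lean document; each statement's English description precedes it below -/
import Mathlib

section
/- For the district admissions rule Ch_d defined by sequential school choice (schools choose in a fixed order, removing contracts of previously chosen students), the 'parallel' rule Ch'_d(X) = Ch_{c_1}(X) ∪ ... ∪ Ch_{c_n}(X) is a completion of Ch_d: for every set of contracts X, if Ch'_d(X) is feasible for students then Ch'_d(X) = Ch_d(X). Moreover, if each school choice function Ch_{c_i} satisfies substitutability and the law of aggregate demand, then so does Ch'_d. -/
open Finset

section

variable {K S : Type*} [DecidableEq K] [DecidableEq S]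

/-- A set of contracts is feasible for students (at most one contract per
student). -/
def feasibleS (st : K → S) (X : Finset K) : Prop :=
  ∀ x ∈ X, ∀ y ∈ X, st x = st y → x = y

/-- The sequential district admissions rule: schools choose in the fixed
order `c_1, …, c_n`; when a school chooses, all contracts of previously
chosen students are removed. -/
def seqCh {n : ℕ} (st : K → S) (Chs : Fin n → Finset K → Finset K)
    (X : Finset K) : Finset K :=
  (List.finRange n).foldl
    (fun acc i => acc ∪ Chs i (X.filter (fun x => ∀ y ∈ acc, st y ≠ st x))) ∅

/-- The parallel rule `Ch'_d(X) = Ch_{c_1}(X) ∪ … ∪ Ch_{c_n}(X)`. -/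
def parCh {n : ℕ} (Chs : Fin n → Finset K → Finset K) (X : Finset K) :
    Finset K :=
  (Finset.univ : Finset (Fin n)).biUnion (fun i => Chs i X)

/-- IRC: removing any collection of rejected contracts does not change the
choice. -/
lemma ircLem (Ch : Finset K → Finset K)
    (hirc : ∀ (X : Finset K) x, x ∈ X → x ∉ Ch X → Ch (X.erase x) = Ch X) :
    ∀ (Y X : Finset K), Ch Y ⊆ X → X ⊆ Y → Ch X = Ch Y := by
  intro Y
  induction Y using Finset.strongInductionOn with
  | _ Y ih =>
    intro X h1 h2
    rcases eq_or_ssubset_of_subset h2 with rfl | hss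
    · rfl
    · obtain ⟨z, hzY, hzX⟩ := exists_of_ssubset hss
      have hz : z ∉ Ch Y := fun h => hzX (h1 h)
      have he := hirc Y z hzY hz
      have h3 : Ch X = Ch (Y.erase z) :=
        ih (Y.erase z) (erase_ssubset hzY) X (he ▸ h1) (subset_erase.mpr ⟨h2, hzX⟩)
      rw [h3, he]

/-- The parallel rule is a completion of the sequential district rule, and
it inherits substitutability and the law of aggregate demand from the
schools' choice functions. -/
theorem parCh_completion_substitutable_lad {n : ℕ}
    (st : K → S) (sch : K → Fin n)
    (Chs : Fin n → Finset K → Finset K)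
    (hsub : ∀ i X, Chs i X ⊆ X.filter (fun x => sch x = i))
    (hsubst : ∀ i (X Y : Finset K), ∀ x ∈ X, X ⊆ Y → x ∈ Chs i Y → x ∈ Chs i X)
    (hlad : ∀ i (X Y : Finset K), X ⊆ Y → (Chs i X).card ≤ (Chs i Y).card)
    (hirc : ∀ i (X : Finset K) x, x ∈ X → x ∉ Chs i X →
      Chs i (X.erase x) = Chs i X) :
    (∀ X : Finset K, feasibleS st (parCh Chs X) → parCh Chs X = seqCh st Chs X) ∧
    (∀ (X Y : Finset K), ∀ x ∈ X, X ⊆ Y → x ∈ parCh Chs Y → x ∈ parCh Chs X) ∧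
    (∀ X Y : Finset K, X ⊆ Y → (parCh Chs X).card ≤ (parCh Chs Y).card) := by
  refine ⟨?_, ?_, ?_⟩
  · -- completion
    intro X hf
    have key : ∀ (l : List (Fin n)) (J : Finset (Fin n)), l.Nodup →
        (∀ i ∈ l, i ∉ J) →
        List.foldl
          (fun acc i => acc ∪ Chs i (X.filter (fun x => ∀ y ∈ acc, st y ≠ st x)))
          (J.biUnion (fun j => Chs j X)) l
          = (J ∪ l.toFinset).biUnion (fun j => Chs j X) := by
      intro l
      induction l with
      | nil => intro J _ _; simp
      | cons i l' ih =>
        intro J hnd hdisj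
        simp only [List.foldl_cons]
        have hstep :
            Chs i (X.filter (fun x =>
              ∀ y ∈ J.biUnion (fun j => Chs j X), st y ≠ st x)) = Chs i X := by
          apply ircLem (Chs i) (hirc i)
          · intro x hx
            refine mem_filter.mpr ⟨(mem_filter.mp (hsub i X hx)).1, ?_⟩
            intro y hy hst
            obtain ⟨j, hjJ, hyj⟩ := mem_biUnion.mp hy
            have hxpar : x ∈ parCh Chs X := mem_biUnion.mpr ⟨i, mem_univ i, hx⟩
            have hypar : y ∈ parCh Chs X := mem_biUnion.mpr ⟨j, mem_univ j, hyj⟩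
            have hyx : y = x := hf y hypar x hxpar hst
            subst hyx
            have h1 : sch y = j := (mem_filter.mp (hsub j X hyj)).2
            have h2 : sch y = i := (mem_filter.mp (hsub i X hx)).2
            exact hdisj i (List.mem_cons_self (a := i) (l := l')) ((h2.symm.trans h1) ▸ hjJ)
          · exact filter_subset _ X
        rw [hstep]
        have hacc : J.biUnion (fun j => Chs j X) ∪ Chs i X
            = (insert i J).biUnion (fun j => Chs j X) := by
          rw [biUnion_insert]; exact union_comm _ _
        rw [hacc, ih (insert i J) (List.nodup_cons.mp hnd).2 ?_]
        · congr 1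
          ext k
          simp only [mem_union, mem_insert, List.toFinset_cons]
          tauto
        · intro k hk hkJ
          rcases mem_insert.mp hkJ with rfl | hkJ
          · exact (List.nodup_cons.mp hnd).1 hk
          · exact hdisj k (List.mem_cons_of_mem i hk) hkJ
    have := key (List.finRange n) ∅ (List.nodup_finRange n) (by simp)
    rw [seqCh, show (∅ : Finset K) = (∅ : Finset (Fin n)).biUnion (fun j => Chs j X)
      by simp, this]
    have huniv : (∅ ∪ (List.finRange n).toFinset : Finset (Fin n)) = univ := by
      ext k; simp [List.mem_finRange]
    rw [huniv, parCh]
  · -- substitutability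
    intro X Y x hxX hXY hx
    obtain ⟨i, _, hxi⟩ := mem_biUnion.mp hx
    exact mem_biUnion.mpr ⟨i, mem_univ i, hsubst i X Y x hxX hXY hxi⟩
  · -- LAD
    intro X Y hXY
    have hd : ∀ (Z : Finset K), ∀ i ∈ (univ : Finset (Fin n)),
        ∀ j ∈ (univ : Finset (Fin n)), i ≠ j →
        Disjoint (Chs i Z) (Chs j Z) := by
      intro Z i _ j _ hij
      rw [disjoint_left]
      intro x hxi hxj
      have h1 : sch x = i := (mem_filter.mp (hsub i Z hxi)).2
      have h2 : sch x = j := (mem_filter.mp (hsub j Z hxj)).2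
      exact hij (h1.symm.trans h2)
    rw [parCh, parCh, card_biUnion (hd X), card_biUnion (hd Y)]
    exact Finset.sum_le_sum (fun i _ => hlad i X Y hXY)

end
end

section
/- If each school choice function satisfies |Ch_{c_i}(X)| = min{q_{c_i}, |X_{c_i}|} for all X, then the sequential district admissions rule Ch_d (schools choose in a fixed order with removal of previously chosen students' contracts) is acceptant: for any matching X feasible for students and any x = (s,d,c) ∈ X_d \ Ch_d(X), the school c fills its capacity q_c in Ch_d(X). -/
open Finset

section

variable {K S : Type*} [DecidableEq K] [DecidableEq S]

lemma seqCh_foldl_mono {n : ℕ} (st : K → S) (Chs : Fin n → Finset K → Finset K)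
    (X : Finset K) :
    ∀ (l : List (Fin n)) (acc : Finset K),
      acc ⊆ l.foldl
        (fun acc i => acc ∪ Chs i (X.filter (fun x => ∀ y ∈ acc, st y ≠ st x))) acc := by
  intro l
  induction l with
  | nil => intro acc; simp
  | cons i l ih =>
    intro acc
    simp only [List.foldl_cons]
    exact subset_trans Finset.subset_union_left (ih _)

lemma seqCh_foldl_subset {n : ℕ} (st : K → S) (sch : K → Fin n)
    (Chs : Fin n → Finset K → Finset K)
    (hsub : ∀ i X, Chs i X ⊆ X.filter (fun x => sch x = i)) (X : Finset K) :
    ∀ (l : List (Fin n)) (acc : Finset K),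
      l.foldl
        (fun acc i => acc ∪ Chs i (X.filter (fun x => ∀ y ∈ acc, st y ≠ st x))) acc
        ⊆ acc ∪ X := by
  intro l
  induction l with
  | nil => intro acc; simp
  | cons i l ih =>
    intro acc
    simp only [List.foldl_cons]
    refine subset_trans (ih _) (Finset.union_subset (Finset.union_subset
      Finset.subset_union_left ?_) Finset.subset_union_right)
    intro y hy
    have := hsub i _ hy
    simp only [Finset.mem_filter] at this
    exact Finset.mem_union_right _ this.1.1

lemma seqCh_foldl_filter {n : ℕ} (st : K → S) (sch : K → Fin n)
    (Chs : Fin n → Finset K → Finset K)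
    (hsub : ∀ i X, Chs i X ⊆ X.filter (fun x => sch x = i)) (X : Finset K)
    (i : Fin n) :
    ∀ (l : List (Fin n)) (acc : Finset K), i ∉ l →
      (l.foldl
        (fun acc i => acc ∪ Chs i (X.filter (fun x => ∀ y ∈ acc, st y ≠ st x))) acc).filter
        (fun y => sch y = i)
      = acc.filter (fun y => sch y = i) := by
  intro l
  induction l with
  | nil => intro acc _; simp
  | cons j l ih =>
    intro acc hil
    have hji : j ≠ i := fun h => hil (h ▸ (show j ∈ j :: l from List.mem_cons_self))
    have hil' : i ∉ l := fun h => hil (List.mem_cons_of_mem _ h)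
    simp only [List.foldl_cons]
    rw [ih _ hil', Finset.filter_union]
    have : (Chs j (X.filter (fun x => ∀ y ∈ acc, st y ≠ st x))).filter
        (fun y => sch y = i) = ∅ := by
      apply Finset.filter_eq_empty_iff.mpr
      intro y hy
      have := hsub j _ hy
      simp only [Finset.mem_filter] at this
      rw [this.2]
      exact hji
    rw [this, Finset.union_empty]

/-- If each school chooses `min{q_c, |X_c|}` contracts from any set, then the
sequential district admissions rule is acceptant: every rejected contract's
school fills its capacity. -/
theorem seqCh_acceptant {n : ℕ}
    (st : K → S) (sch : K → Fin n) (q : Fin n → ℕ)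
    (Chs : Fin n → Finset K → Finset K)
    (hsub : ∀ i X, Chs i X ⊆ X.filter (fun x => sch x = i))
    (hcard : ∀ i (X : Finset K),
      (Chs i X).card = min (q i) ((X.filter (fun x => sch x = i)).card)) :
    ∀ (X : Finset K), feasibleS st X → ∀ x ∈ X, x ∉ seqCh st Chs X →
      ((seqCh st Chs X).filter (fun y => sch y = sch x)).card = q (sch x) := by
  intro X hfeas x hx hnx
  set i := sch x with hi
  set f : Finset K → Fin n → Finset K :=
    fun acc i => acc ∪ Chs i (X.filter (fun x => ∀ y ∈ acc, st y ≠ st x)) with hf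
  obtain ⟨l₁, l₂, hl⟩ := List.append_of_mem (List.mem_finRange i)
  have hnd := List.nodup_finRange n
  rw [hl] at hnd
  have hil₁ : i ∉ l₁ := by
    intro h
    exact (List.disjoint_of_nodup_append hnd) h (show i ∈ i :: l₂ from List.mem_cons_self)
  have hil₂ : i ∉ l₂ := by
    have := (List.nodup_append'.mp hnd).2.1
    exact (List.nodup_cons.mp this).1
  have hseq : seqCh st Chs X = l₂.foldl f (f (l₁.foldl f ∅) i) := by
    rw [seqCh, hl, List.foldl_append, List.foldl_cons]
  set A : Finset K := l₁.foldl f ∅ with hA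
  set Y : Finset K := X.filter (fun x => ∀ y ∈ A, st y ≠ st x) with hY
  have hfAi : f A i = A ∪ Chs i Y := rfl
  have hAX : A ⊆ X := by
    have := seqCh_foldl_subset st sch Chs hsub X l₁ ∅
    rwa [Finset.empty_union] at this
  -- x ∈ Y
  have hxA : x ∉ A := by
    intro hxa
    apply hnx
    rw [hseq]
    exact seqCh_foldl_mono st Chs X l₂ _ (Finset.mem_union_left _ hxa)
  have hxY : x ∈ Y := by
    rw [hY, Finset.mem_filter]
    refine ⟨hx, fun y hy hst => ?_⟩
    exact hxA ((hfeas y (hAX hy) x hx hst) ▸ hy)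
  -- x ∉ Chs i Y
  have hxC : x ∉ Chs i Y := by
    intro hxc
    apply hnx
    rw [hseq]
    exact seqCh_foldl_mono st Chs X l₂ _ (Finset.mem_union_right _ hxc)
  -- filter of seqCh equals Chs i Y
  have hfilter : (seqCh st Chs X).filter (fun y => sch y = i) = Chs i Y := by
    rw [hseq, seqCh_foldl_filter st sch Chs hsub X i l₂ _ hil₂, hfAi,
      Finset.filter_union, seqCh_foldl_filter st sch Chs hsub X i l₁ _ hil₁,
      Finset.filter_empty, Finset.empty_union]
    apply Finset.filter_eq_self.mpr
    intro y hy
    have := hsub i _ hy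
    simp only [Finset.mem_filter] at this
    exact this.2
  rw [hfilter, hcard]
  rcases le_or_gt (q i) ((Y.filter (fun z => sch z = i)).card) with h | h
  · exact min_eq_left h
  · exfalso
    have hcardeq : (Chs i Y).card = (Y.filter (fun z => sch z = i)).card := by
      rw [hcard]; exact min_eq_right h.le
    have heq := Finset.eq_of_subset_of_card_le (hsub i Y) hcardeq.ge
    apply hxC
    rw [heq, Finset.mem_filter]
    exact ⟨hxY, hi.symm⟩

end
end
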